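/- (Proposition B.1.) Let X = {x ∈ ℝ^n : 0 ≤ x ≤ u} be an axis-aligned box containing 0 and let f : X → ℝ. Then f is weakly DR-submodular if and only if f has submodularity ratio 1, i.e., for all x, y ∈ X with x + y ∈ X, ∑_{i=1}^n [f(x + y_i e_i) − f(x)] ≥ f(x + y) − f(x). -/

import Mathlib

/-- A function `f` on a subset `X ⊆ ℝ^n` is weakly DR-submodular if for all `x ≤ y` in `X`,
every coordinate `i` with `x i = y i`, and every `k ≥ 0` keeping both points in `X`,
`f (x + k eᵢ) − f x ≥ f (y + k eᵢ) − f y`. -/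
def WeaklyDRSubmodularOn {n : ℕ} (X : Set (Fin n → ℝ)) (f : (Fin n → ℝ) → ℝ) : Prop :=
  ∀ ⦃x y : Fin n → ℝ⦄, x ∈ X → y ∈ X → x ≤ y →
    ∀ i : Fin n, x i = y i → ∀ k : ℝ, 0 ≤ k →
      x + Pi.single i k ∈ X → y + Pi.single i k ∈ X →
        f (x + Pi.single i k) - f x ≥ f (y + Pi.single i k) - f y

/-- Proposition B.1: on a box `X = [0, u]` containing `0`, `f` is weakly DR-submodular if and
only if it has submodularity ratio `1`, i.e. for all `x, y ∈ X` with `x + y ∈ X`,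
`∑ᵢ (f(x + yᵢ eᵢ) − f(x)) ≥ f(x + y) − f(x)`. -/
theorem weaklyDRSubmodular_iff_submodularityRatio_one {n : ℕ}
    (u : Fin n → ℝ) (hu : (0 : Fin n → ℝ) ≤ u) (f : (Fin n → ℝ) → ℝ) :
    WeaklyDRSubmodularOn (Set.Icc 0 u) f ↔
      ∀ x ∈ Set.Icc (0 : Fin n → ℝ) u, ∀ y ∈ Set.Icc (0 : Fin n → ℝ) u,
        x + y ∈ Set.Icc (0 : Fin n → ℝ) u →
          ∑ i : Fin n, (f (x + Pi.single i (y i)) - f x) ≥ f (x + y) - f x := by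
  classical
  constructor
  · -- Forward direction: weak DR-submodularity implies submodularity ratio 1.
    intro H x hx y hy hxy
    have hx0 : (0 : Fin n → ℝ) ≤ x := hx.1
    have hy0 : (0 : Fin n → ℝ) ≤ y := hy.1
    have hxyu : x + y ≤ u := hxy.2
    -- masked partial sums
    have key : ∀ s : Finset (Fin n),
        ∑ i ∈ s, (f (x + Pi.single i (y i)) - f x)
          ≥ f (x + fun m => if m ∈ s then y m else 0) - f x := by
      intro s
      induction s using Finset.induction_on with
      | empty =>
          have h0 : (x + fun _ : Fin n => (0 : ℝ)) = x := by funext m; simp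
          simp [h0]
      | @insert j s hjs ih =>
          set z : Fin n → ℝ := x + fun m => if m ∈ s then y m else 0 with hz
          have hmask_le : (fun m => if m ∈ s then y m else 0) ≤ y := by
            intro m; dsimp only; split_ifs with h
            · exact le_refl _
            · exact hy0 m
          have hmask0 : (0 : Fin n → ℝ) ≤ fun m => if m ∈ s then y m else 0 := by
            intro m; dsimp only; split_ifs with h
            · exact hy0 m
            · exact le_refl _
          have hz0 : (0 : Fin n → ℝ) ≤ z := le_add_of_le_of_nonneg hx0 hmask0
          have hzxy : z ≤ x + y := add_le_add_right hmask_le x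
          have hzmem : z ∈ Set.Icc (0 : Fin n → ℝ) u := ⟨hz0, hzxy.trans hxyu⟩
          have hxz : x ≤ z := le_add_of_nonneg_right hmask0
          have hxj : x j = z j := by
            simp [hz, hjs]
          have hsingle_le : ∀ (m : Fin n), Pi.single m (y m) ≤ y := by
            intro m mm
            rw [Pi.single_apply]
            split_ifs with h
            · subst h; exact le_refl _
            · exact hy0 mm
          have hxs_mem : x + Pi.single j (y j) ∈ Set.Icc (0 : Fin n → ℝ) u := by
            constructor
            · exact le_add_of_le_of_nonneg hx0
                (by intro m; rw [Pi.single_apply]; split_ifs with h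
                    · subst h; exact hy0 m
                    · exact le_refl _)
            · exact le_trans (add_le_add_right (hsingle_le j) x) hxyu
          have hzins : z + Pi.single j (y j) =
              x + fun m => if m ∈ insert j s then y m else 0 := by
            funext m
            simp only [hz, Pi.add_apply, Pi.single_apply, Finset.mem_insert]
            by_cases h : m = j
            · subst h; simp [hjs]
            · simp [h]
          have hmask'_le : (fun m => if m ∈ insert j s then y m else 0) ≤ y := by
            intro m; dsimp only; split_ifs with h
            · exact le_refl _
            · exact hy0 m
          have hmask'0 : (0 : Fin n → ℝ) ≤ fun m => if m ∈ insert j s then y m else 0 := by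
            intro m; dsimp only; split_ifs with h
            · exact hy0 m
            · exact le_refl _
          have hzs_mem : z + Pi.single j (y j) ∈ Set.Icc (0 : Fin n → ℝ) u := by
            rw [hzins]
            exact ⟨le_add_of_le_of_nonneg hx0 hmask'0,
              le_trans (add_le_add_right hmask'_le x) hxyu⟩
          have hdr := H hx hzmem hxz j hxj (y j) (hy0 j) hxs_mem hzs_mem
          rw [Finset.sum_insert hjs]
          rw [hzins] at hdr
          calc (f (x + Pi.single j (y j)) - f x)
                + ∑ i ∈ s, (f (x + Pi.single i (y i)) - f x)
              ≥ (f (x + fun m => if m ∈ insert j s then y m else 0) - f z)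
                + (f z - f x) := by
                have := ih
                linarith
            _ = f (x + fun m => if m ∈ insert j s then y m else 0) - f x := by ring
    have h := key Finset.univ
    have : (x + fun m => if m ∈ (Finset.univ : Finset (Fin n)) then y m else 0) = x + y := by
      funext m; simp
    rw [this] at h
    simpa using h
  · -- Backward direction.
    intro H x y hx hy hle i hxiyi k hk hxk hyk
    -- Pairwise exchange lemma derived from the ratio inequality.
    have pair : ∀ z ∈ Set.Icc (0 : Fin n → ℝ) u, ∀ p q : Fin n, p ≠ q → ∀ a b : ℝ,
        0 ≤ a → 0 ≤ b → z + Pi.single p a + Pi.single q b ∈ Set.Icc (0 : Fin n → ℝ) u →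
        f (z + Pi.single p a) - f z
          ≥ f (z + Pi.single p a + Pi.single q b) - f (z + Pi.single q b) := by
      intro z hz p q hpq a b ha hb hmem
      set w : Fin n → ℝ := Pi.single p a + Pi.single q b with hw
      have hsp : ∀ m, 0 ≤ (Pi.single p a : Fin n → ℝ) m := by
        intro m; rw [Pi.single_apply]; split_ifs; exacts [ha, le_refl _]
      have hsq : ∀ m, 0 ≤ (Pi.single q b : Fin n → ℝ) m := by
        intro m; rw [Pi.single_apply]; split_ifs; exacts [hb, le_refl _]
      have hw0 : (0 : Fin n → ℝ) ≤ w := by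
        intro m
        simp only [hw, Pi.add_apply, Pi.zero_apply]
        have := hsp m; have := hsq m; linarith
      have hzw : z + w = z + Pi.single p a + Pi.single q b := by
        rw [hw]; exact (add_assoc z _ _).symm
      rw [← hzw] at hmem
      have hwu : w ≤ u := by
        intro m
        have h1 : z m + w m ≤ u m := hmem.2 m
        have h2 : 0 ≤ z m := hz.1 m
        linarith
      have hwmem : w ∈ Set.Icc (0 : Fin n → ℝ) u := ⟨hw0, hwu⟩
      have hzwmem : z + w ∈ Set.Icc (0 : Fin n → ℝ) u := hmem
      have hsum := H z hz w hwmem hzwmem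
      have hterm : ∀ m : Fin n, m ≠ p ∧ m ≠ q →
          (f (z + Pi.single m (w m)) - f z) = 0 := by
        intro m ⟨hmp, hmq⟩
        have : w m = 0 := by simp [hw, Pi.single_apply, hmp, hmq]
        rw [this]
        simp
      have hsum_eq : ∑ m : Fin n, (f (z + Pi.single m (w m)) - f z)
          = (f (z + Pi.single p (w p)) - f z) + (f (z + Pi.single q (w q)) - f z) :=
        Fintype.sum_eq_add p q hpq hterm
      have hwp : w p = a := by simp [hw, Pi.single_apply, hpq]
      have hwq : w q = b := by simp [hw, Pi.single_apply, hpq.symm]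
      rw [hsum_eq, hwp, hwq, hzw] at hsum
      linarith
    -- Induction over the set of coordinates on which we move from x towards y.
    have key : ∀ s : Finset (Fin n),
        f (x + Pi.single i k) - f x
          ≥ f ((x + fun m => if m ∈ s then y m - x m else 0) + Pi.single i k)
            - f (x + fun m => if m ∈ s then y m - x m else 0) := by
      intro s
      induction s using Finset.induction_on with
      | empty =>
          have h0 : (x + fun m => if m ∈ (∅ : Finset (Fin n)) then y m - x m else 0) = x := by
            funext m; simp
          rw [h0]
      | @insert j s hjs ih =>
          by_cases hdj : y j - x j = 0
          · have : (fun m => if m ∈ insert j s then y m - x m else 0)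
                = fun m => if m ∈ s then y m - x m else 0 := by
              funext m
              by_cases h : m = j
              · subst h; simp [hjs, hdj]
              · simp [h]
            rw [this]; exact ih
          · have hji : j ≠ i := by
              intro h; subst h; exact hdj (by rw [hxiyi]; ring)
            set z : Fin n → ℝ := x + fun m => if m ∈ s then y m - x m else 0 with hz
            have hd0 : ∀ m, 0 ≤ y m - x m := fun m => sub_nonneg.2 (hle m)
            have hmask0 : (0 : Fin n → ℝ) ≤ fun m => if m ∈ s then y m - x m else 0 := by
              intro m; dsimp only; split_ifs with h
              · exact hd0 m
              · exact le_refl _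
            have hzley : z ≤ y := by
              intro m
              simp only [hz, Pi.add_apply]
              split_ifs with h
              · linarith
              · linarith [hle m]
            have hz0 : (0 : Fin n → ℝ) ≤ z := le_add_of_le_of_nonneg hx.1 hmask0
            have hzmem : z ∈ Set.Icc (0 : Fin n → ℝ) u := ⟨hz0, hzley.trans hy.2⟩
            have hzj : z + Pi.single j (y j - x j)
                = x + fun m => if m ∈ insert j s then y m - x m else 0 := by
              funext m
              simp only [hz, Pi.add_apply, Pi.single_apply, Finset.mem_insert]
              by_cases h : m = j
              · subst h; simp [hjs]
              · simp [h]
            have hmem : z + Pi.single i k + Pi.single j (y j - x j)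
                ∈ Set.Icc (0 : Fin n → ℝ) u := by
              constructor
              · intro m
                have h1 : 0 ≤ (Pi.single i k : Fin n → ℝ) m := by
                  rw [Pi.single_apply]; split_ifs; exacts [hk, le_refl _]
                have h2 : 0 ≤ (Pi.single j (y j - x j) : Fin n → ℝ) m := by
                  rw [Pi.single_apply]; split_ifs; exacts [hd0 j, le_refl _]
                have h3 : 0 ≤ z m := hz0 m
                simp only [Pi.add_apply, Pi.zero_apply]
                linarith
              · intro m
                have hbound : y m + (Pi.single i k : Fin n → ℝ) m ≤ u m := hyk.2 m
                have hzm : z m ≤ y m := hzley m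
                simp only [Pi.add_apply, Pi.single_apply] at hbound ⊢
                by_cases hmj : m = j
                · subst hmj
                  rw [if_pos rfl, if_neg hji]
                  rw [if_neg hji] at hbound
                  have hzx : z m = x m := by
                    rw [hz]; simp [hjs]
                  rw [hzx]
                  linarith
                · rw [if_neg hmj]
                  by_cases hmi : m = i
                  · rw [if_pos hmi] at hbound ⊢
                    linarith
                  · rw [if_neg hmi] at hbound ⊢
                    linarith
            have hp := pair z hzmem i j (fun h => hji h.symm) k (y j - x j) hk
              (hd0 j) hmem
            have hcomm : z + Pi.single i k + Pi.single j (y j - x j)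
                = (x + fun m => if m ∈ insert j s then y m - x m else 0) + Pi.single i k := by
              rw [← hzj, add_right_comm]
            rw [hcomm, hzj] at hp
            linarith
    have h := key Finset.univ
    have hy_eq : (x + fun m => if m ∈ (Finset.univ : Finset (Fin n)) then y m - x m else 0)
        = y := by
      funext m; simp
    rw [hy_eq] at h
    exact h
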